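/- arXiv:2405.00082 — 3 statements merged into one kernel-verified Lean document; each statement's English description precedes it below -/
import Mathlib

section
/- Unbiasedness of the classical-shadows estimator for operators (from the proof of Lemma 4.2). Let Z ∈ ℂ^{2^n × 2^n} be unitary and let X, P ∈ 𝒫. Then (1/(3^n · 2^n · 3^n)) · Σ_{A ∈ {σ_x,σ_y,σ_z}^n} Σ_{v ∈ {±1}^n} Σ_{B ∈ {σ_x,σ_y,σ_z}^n} Σ_{w ∈ {±1}^n} |⟨B,w| Z |A,v⟩|² · 3^{|supp(X)|} v^{supp(X)} · 3^{|supp(P)|} w^{supp(P)} · 1[X ⊆ A] · 1[P ⊆ B] = (1/2^n) · tr(P Z X Z†). -/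
open Complex Matrix
open scoped BigOperators Classical

noncomputable section

/-- The space of `n`-qubit operators, as matrices indexed by bit-strings. -/
abbrev QMat (n : ℕ) := Matrix (Fin n → Fin 2) (Fin n → Fin 2) ℂ

/-- The single-qubit Pauli matrices, indexed so that `0 = σ_I`, `1 = σ_x`, `2 = σ_y`,
`3 = σ_z`. -/
def pauli1 (a : Fin 4) : Matrix (Fin 2) (Fin 2) ℂ :=
  if a = 0 then 1
  else if a = 1 then !![0, 1; 1, 0]
  else if a = 2 then !![0, -Complex.I; Complex.I, 0]
  else !![1, 0; 0, -1]

/-- The `n`-qubit Pauli (Kronecker product of single-qubit Paulis) described by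
`p : Fin n → Fin 4`. -/
def PauliOp {n : ℕ} (p : Fin n → Fin 4) : QMat n :=
  Matrix.of fun x y => ∏ i, pauli1 (p i) (x i) (y i)

/-- The support of a Pauli: the set of qubits where it acts non-trivially. -/
def psupp {n : ℕ} (p : Fin n → Fin 4) : Finset (Fin n) :=
  Finset.univ.filter fun i => p i ≠ 0

/-- The sign `±1` associated to a boolean (`true ↦ +1`, `false ↦ −1`). -/
def sgn (b : Bool) : ℝ := if b then 1 else -1

/-- `v^S = Π_{i ∈ S} v_i` for a sign vector `v : Fin n → Bool`. -/
def sgnProd {n : ℕ} (S : Finset (Fin n)) (v : Fin n → Bool) : ℝ :=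
  ∏ i ∈ S, sgn (v i)

/-- The unit eigenvector of the single-qubit Pauli `σ_x` (`a = 0`), `σ_y` (`a = 1`),
`σ_z` (`a = 2`) with eigenvalue `+1` (`b = true`) or `−1` (`b = false`). -/
def eig1 (a : Fin 3) (b : Bool) : Fin 2 → ℂ :=
  if a = 0 then
    fun j => ((Real.sqrt 2 : ℂ))⁻¹ * (if j = 0 then 1 else (if b then 1 else -1))
  else if a = 1 then
    fun j => ((Real.sqrt 2 : ℂ))⁻¹ * (if j = 0 then 1 else (if b then Complex.I else -Complex.I))
  else
    fun j => if b then (if j = 0 then 1 else 0) else (if j = 0 then 0 else 1)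

/-- The `n`-qubit Pauli-basis eigenvector `|A, v⟩ = ⊗_i |A_i, v_i⟩`, for a basis choice
`A : Fin n → Fin 3` (among `σ_x, σ_y, σ_z`) and signs `v : Fin n → Bool`. -/
def eigvec {n : ℕ} (A : Fin n → Fin 3) (v : Fin n → Bool) : (Fin n → Fin 2) → ℂ :=
  fun x => ∏ i, eig1 (A i) (v i) (x i)

/-- The rank-one projector `|ψ⟩⟨ψ|`. -/
def outer {m : Type*} [Fintype m] (ψ : m → ℂ) : Matrix m m ℂ :=
  Matrix.vecMulVec ψ (star ψ)

/-- The `n`-qubit Pauli `B_S ⊗ I_{S̄}` which is `B_i` on `i ∈ S` and identity elsewhere. -/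
def PauliOnSet {n : ℕ} (B : Fin n → Fin 3) (S : Finset (Fin n)) : QMat n :=
  PauliOp fun i => if i ∈ S then (B i).succ else 0

/-! ### Auxiliary lemmas -/

/-- Single-qubit coefficient appearing in the classical-shadows estimator. -/
def c1 (c : Fin 4) (a : Fin 3) (b : Bool) : ℂ :=
  (if c = 0 then 1 else 3 * ((sgn b : ℝ) : ℂ)) * (if c = 0 ∨ c = a.succ then 1 else 0)

lemma key1 (c : Fin 4) (x y : Fin 2) :
    ∑ a : Fin 3, ∑ b : Bool, c1 c a b * (eig1 a b x * (starRingEnd ℂ) (eig1 a b y))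
      = 3 * pauli1 c x y := by
  have hs : ((Real.sqrt 2 : ℂ))⁻¹ * ((Real.sqrt 2 : ℂ))⁻¹ = (2 : ℂ)⁻¹ := by
    rw [← mul_inv]
    norm_num [← Complex.ofReal_mul, Real.mul_self_sqrt]
  have hconj : (starRingEnd ℂ) ((Real.sqrt 2 : ℂ))⁻¹ = ((Real.sqrt 2 : ℂ))⁻¹ := by
    rw [← Complex.ofReal_inv, Complex.conj_ofReal]
  have hsq : ((Real.sqrt 2 : ℂ)) ^ 2 = 2 := by
    rw [← Complex.ofReal_pow, Real.sq_sqrt (by norm_num : (2:ℝ) ≥ 0)]; norm_num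
  fin_cases c <;> fin_cases x <;> fin_cases y <;>
    simp [Fin.sum_univ_three, c1, eig1, sgn, pauli1, Fin.isValue, hconj, _root_.map_mul] <;>
    ring_nf <;>
    first
      | decide
      | (simp [hs, hsq, Complex.ext_iff] <;> ring_nf <;> simp [hsq] <;> norm_num)

lemma indicator_prod {n : ℕ} (Q : Fin n → Prop) [∀ i, Decidable (Q i)] :
    (if ∀ i, Q i then (1:ℂ) else 0) = ∏ i, (if Q i then (1:ℂ) else 0) := by
  by_cases h : ∀ i, Q i
  · simp [h]
  · rw [if_neg h]
    push_neg at h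
    obtain ⟨i, hi⟩ := h
    exact (Finset.prod_eq_zero (Finset.mem_univ i) (by simp [hi])).symm

lemma cf_eq {n : ℕ} (X : Fin n → Fin 4) (A : Fin n → Fin 3) (v : Fin n → Bool) :
    (3:ℂ) ^ (psupp X).card * ((sgnProd (psupp X) v : ℝ) : ℂ)
        * (if ∀ i, X i = 0 ∨ X i = (A i).succ then (1:ℂ) else 0)
      = ∏ i, c1 (X i) (A i) (v i) := by
  have h3 : (3:ℂ) ^ (psupp X).card = ∏ i, (if X i ≠ 0 then (3:ℂ) else 1) := by
    rw [← Finset.prod_const, psupp, Finset.prod_filter]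
  have hsg : ((sgnProd (psupp X) v : ℝ) : ℂ) = ∏ i, (if X i ≠ 0 then ((sgn (v i) : ℝ) : ℂ) else 1) := by
    rw [sgnProd, Complex.ofReal_prod, psupp, Finset.prod_filter]
  rw [h3, hsg, indicator_prod, ← Finset.prod_mul_distrib, ← Finset.prod_mul_distrib]
  refine Finset.prod_congr rfl fun i _ => ?_
  by_cases h : X i = 0 <;> simp [c1, h] <;> ring

set_option maxHeartbeats 1000000 in
lemma keyN {n : ℕ} (X : Fin n → Fin 4) :
    ∑ A : Fin n → Fin 3, ∑ v : Fin n → Bool,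
        ((3:ℂ) ^ (psupp X).card * ((sgnProd (psupp X) v : ℝ) : ℂ)
          * (if ∀ i, X i = 0 ∨ X i = (A i).succ then (1:ℂ) else 0)) • outer (eigvec A v)
      = ((3:ℂ) ^ n) • PauliOp X := by
  ext x y
  simp only [Matrix.sum_apply, Matrix.smul_apply, outer, Matrix.vecMulVec_apply,
    Pi.star_apply, smul_eq_mul, PauliOp, Matrix.of_apply]
  have hterm : ∀ (A : Fin n → Fin 3) (v : Fin n → Bool),
      ((3:ℂ) ^ (psupp X).card * ((sgnProd (psupp X) v : ℝ) : ℂ)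
          * (if ∀ i, X i = 0 ∨ X i = (A i).succ then (1:ℂ) else 0))
        * (eigvec A v x * star (eigvec A v y))
      = ∏ i, (c1 (X i) (A i) (v i)
          * (eig1 (A i) (v i) (x i) * (starRingEnd ℂ) (eig1 (A i) (v i) (y i)))) := by
    intro A v
    rw [cf_eq, eigvec, eigvec,
      show (star (∏ i, eig1 (A i) (v i) (y i)) : ℂ)
          = ∏ i, (starRingEnd ℂ) (eig1 (A i) (v i) (y i)) from by rw [← map_prod]; rfl,
      ← Finset.prod_mul_distrib, ← Finset.prod_mul_distrib]
  calc
    ∑ A : Fin n → Fin 3, ∑ v : Fin n → Bool,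
        ((3:ℂ) ^ (psupp X).card * ((sgnProd (psupp X) v : ℝ) : ℂ)
          * (if ∀ i, X i = 0 ∨ X i = (A i).succ then (1:ℂ) else 0))
          * (eigvec A v x * star (eigvec A v y))
      = ∑ A : Fin n → Fin 3, ∑ v : Fin n → Bool, ∏ i,
          (c1 (X i) (A i) (v i)
            * (eig1 (A i) (v i) (x i) * (starRingEnd ℂ) (eig1 (A i) (v i) (y i)))) :=
        Finset.sum_congr rfl fun A _ => Finset.sum_congr rfl fun v _ => hterm A v
    _ = ∑ A : Fin n → Fin 3, ∏ i, ∑ b : Bool,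
          (c1 (X i) (A i) b * (eig1 (A i) b (x i) * (starRingEnd ℂ) (eig1 (A i) b (y i)))) :=
        Finset.sum_congr rfl fun A _ => (Fintype.prod_sum fun i (b : Bool) =>
          c1 (X i) (A i) b * (eig1 (A i) b (x i) * (starRingEnd ℂ) (eig1 (A i) b (y i)))).symm
    _ = ∏ i, ∑ a : Fin 3, ∑ b : Bool,
          (c1 (X i) a b * (eig1 a b (x i) * (starRingEnd ℂ) (eig1 a b (y i)))) :=
        (Fintype.prod_sum fun i (a : Fin 3) => ∑ b : Bool,
          c1 (X i) a b * (eig1 a b (x i) * (starRingEnd ℂ) (eig1 a b (y i)))).symm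
    _ = ∏ i, (3 * pauli1 (X i) (x i) (y i)) := Finset.prod_congr rfl fun i _ => key1 _ _ _
    _ = (3:ℂ) ^ n * ∏ i, pauli1 (X i) (x i) (y i) := by
        rw [Finset.prod_mul_distrib, Finset.prod_const, Finset.card_univ, Fintype.card_fin]

lemma outer_mul {m : Type*} [Fintype m] (u : m → ℂ) (M : Matrix m m ℂ) :
    outer u * M = Matrix.vecMulVec u (Matrix.vecMul (star u) M) := by
  ext i j
  simp [outer, Matrix.mul_apply, Matrix.vecMulVec_apply, Matrix.vecMul, dotProduct,
    Finset.mul_sum, mul_assoc]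

lemma trace_vecMulVec {m : Type*} [Fintype m] (u v : m → ℂ) :
    Matrix.trace (Matrix.vecMulVec u v) = v ⬝ᵥ u := by
  simp [Matrix.trace, Matrix.vecMulVec_apply, dotProduct, Matrix.diag, mul_comm]

lemma vecMulVec_mul_vecMulVec {m : Type*} [Fintype m] (u a ψ b : m → ℂ) :
    Matrix.vecMulVec u a * Matrix.vecMulVec ψ b = (a ⬝ᵥ ψ) • Matrix.vecMulVec u b := by
  ext i j
  simp only [Matrix.mul_apply, Matrix.vecMulVec_apply, Matrix.smul_apply, dotProduct,
    smul_eq_mul, Finset.sum_mul]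
  exact Finset.sum_congr rfl fun _ _ => by ring

lemma trace_outer {m : Type*} [Fintype m] (u ψ : m → ℂ) (M N : Matrix m m ℂ) :
    Matrix.trace (outer u * M * outer ψ * N)
      = (star u ⬝ᵥ M.mulVec ψ) * (star ψ ⬝ᵥ N.mulVec u) := by
  rw [mul_assoc, outer_mul, outer_mul, _root_.vecMulVec_mul_vecMulVec, Matrix.trace_smul,
    _root_.trace_vecMulVec, smul_eq_mul, Matrix.dotProduct_mulVec, Matrix.dotProduct_mulVec]

lemma conj_dot {n : ℕ} (Z : QMat n) (u ψ : (Fin n → Fin 2) → ℂ) :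
    star ψ ⬝ᵥ Zᴴ.mulVec u = (starRingEnd ℂ) (star u ⬝ᵥ Z.mulVec ψ) := by
  simp only [dotProduct, Matrix.mulVec, Matrix.conjTranspose_apply, Pi.star_apply,
    map_sum, _root_.map_mul, Finset.mul_sum, Complex.conj_conj, RCLike.star_def]
  rw [Finset.sum_comm]
  exact Finset.sum_congr rfl fun _ _ => Finset.sum_congr rfl fun _ _ => by ring

/-- from the proof of Lemma 4.2: unbiasedness of the classical-shadows
estimator for operators. -/
theorem classical_shadows_unbiased (n : ℕ) (Z : QMat n)
    (hZ : Z ∈ Matrix.unitaryGroup (Fin n → Fin 2) ℂ) (X P : Fin n → Fin 4) :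
    ((3 ^ n * 2 ^ n * 3 ^ n : ℂ))⁻¹ *
        ∑ A : Fin n → Fin 3, ∑ v : Fin n → Bool, ∑ B : Fin n → Fin 3, ∑ w : Fin n → Bool,
          ((‖star (eigvec B w) ⬝ᵥ Z.mulVec (eigvec A v)‖ ^ 2 : ℝ) : ℂ)
            * (3 : ℂ) ^ (psupp X).card * (sgnProd (psupp X) v : ℂ)
            * (3 : ℂ) ^ (psupp P).card * (sgnProd (psupp P) w : ℂ)
            * (if ∀ i, X i = 0 ∨ X i = (A i).succ then 1 else 0)
            * (if ∀ i, P i = 0 ∨ P i = (B i).succ then 1 else 0)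
      = ((2 ^ n : ℂ))⁻¹ * Matrix.trace (PauliOp P * Z * PauliOp X * Zᴴ) := by
  have habs : ∀ z : ℂ, ((‖z‖ ^ 2 : ℝ) : ℂ) = z * (starRingEnd ℂ) z := fun z => by
    rw [Complex.sq_norm]; exact (Complex.mul_conj z).symm
  have hterm : ∀ (A : Fin n → Fin 3) (v : Fin n → Bool) (B : Fin n → Fin 3) (w : Fin n → Bool),
      ((‖star (eigvec B w) ⬝ᵥ Z.mulVec (eigvec A v)‖ ^ 2 : ℝ) : ℂ)
          * (3 : ℂ) ^ (psupp X).card * (sgnProd (psupp X) v : ℂ)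
          * (3 : ℂ) ^ (psupp P).card * (sgnProd (psupp P) w : ℂ)
          * (if ∀ i, X i = 0 ∨ X i = (A i).succ then 1 else 0)
          * (if ∀ i, P i = 0 ∨ P i = (B i).succ then 1 else 0)
        = Matrix.trace
            ((((3:ℂ) ^ (psupp P).card * ((sgnProd (psupp P) w : ℝ) : ℂ)
                * (if ∀ i, P i = 0 ∨ P i = (B i).succ then (1:ℂ) else 0)) • outer (eigvec B w))
              * (Z * ((((3:ℂ) ^ (psupp X).card * ((sgnProd (psupp X) v : ℝ) : ℂ)
                * (if ∀ i, X i = 0 ∨ X i = (A i).succ then (1:ℂ) else 0)) • outer (eigvec A v))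
                  * Zᴴ))) := by
    intro A v B w
    simp only [smul_mul_assoc, mul_smul_comm, Matrix.trace_smul, smul_eq_mul]
    rw [show outer (eigvec B w) * (Z * (outer (eigvec A v) * Zᴴ))
        = outer (eigvec B w) * Z * outer (eigvec A v) * Zᴴ by
      rw [← mul_assoc, ← mul_assoc]]
    rw [trace_outer, conj_dot, habs]
    ring
  have hsum : (∑ A : Fin n → Fin 3, ∑ v : Fin n → Bool, ∑ B : Fin n → Fin 3, ∑ w : Fin n → Bool,
          ((‖star (eigvec B w) ⬝ᵥ Z.mulVec (eigvec A v)‖ ^ 2 : ℝ) : ℂ)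
            * (3 : ℂ) ^ (psupp X).card * (sgnProd (psupp X) v : ℂ)
            * (3 : ℂ) ^ (psupp P).card * (sgnProd (psupp P) w : ℂ)
            * (if ∀ i, X i = 0 ∨ X i = (A i).succ then 1 else 0)
            * (if ∀ i, P i = 0 ∨ P i = (B i).succ then 1 else 0))
      = Matrix.trace ((((3:ℂ) ^ n) • PauliOp P)
          * (Z * ((((3:ℂ) ^ n) • PauliOp X) * Zᴴ))) := by
    have pullB : ∀ C : QMat n,
        ∑ B : Fin n → Fin 3, ∑ w : Fin n → Bool,
          Matrix.trace ((((3:ℂ) ^ (psupp P).card * ((sgnProd (psupp P) w : ℝ) : ℂ)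
              * (if ∀ i, P i = 0 ∨ P i = (B i).succ then (1:ℂ) else 0)) • outer (eigvec B w)) * C)
          = Matrix.trace ((((3:ℂ) ^ n) • PauliOp P) * C) := by
      intro C
      conv_rhs => rw [← keyN P]
      simp only [Finset.sum_mul, Matrix.trace_sum]
    calc
      _ = ∑ A : Fin n → Fin 3, ∑ v : Fin n → Bool, ∑ B : Fin n → Fin 3, ∑ w : Fin n → Bool,
          Matrix.trace
            ((((3:ℂ) ^ (psupp P).card * ((sgnProd (psupp P) w : ℝ) : ℂ)
                * (if ∀ i, P i = 0 ∨ P i = (B i).succ then (1:ℂ) else 0)) • outer (eigvec B w))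
              * (Z * ((((3:ℂ) ^ (psupp X).card * ((sgnProd (psupp X) v : ℝ) : ℂ)
                * (if ∀ i, X i = 0 ∨ X i = (A i).succ then (1:ℂ) else 0)) • outer (eigvec A v))
                  * Zᴴ))) :=
        Finset.sum_congr rfl fun A _ => Finset.sum_congr rfl fun v _ =>
          Finset.sum_congr rfl fun B _ => Finset.sum_congr rfl fun w _ => hterm A v B w
      _ = ∑ A : Fin n → Fin 3, ∑ v : Fin n → Bool,
          Matrix.trace ((((3:ℂ) ^ n) • PauliOp P)
            * (Z * ((((3:ℂ) ^ (psupp X).card * ((sgnProd (psupp X) v : ℝ) : ℂ)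
                * (if ∀ i, X i = 0 ∨ X i = (A i).succ then (1:ℂ) else 0)) • outer (eigvec A v))
                  * Zᴴ))) :=
        Finset.sum_congr rfl fun A _ => Finset.sum_congr rfl fun v _ => pullB _
      _ = Matrix.trace ((((3:ℂ) ^ n) • PauliOp P)
            * (Z * ((((3:ℂ) ^ n) • PauliOp X) * Zᴴ))) := by
        conv_rhs => rw [← keyN X]
        simp only [Finset.sum_mul, Finset.mul_sum, Matrix.trace_sum]
  rw [hsum]
  have htr : Matrix.trace ((((3:ℂ) ^ n) • PauliOp P) * (Z * ((((3:ℂ) ^ n) • PauliOp X) * Zᴴ)))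
      = (3:ℂ) ^ n * ((3:ℂ) ^ n * Matrix.trace (PauliOp P * Z * PauliOp X * Zᴴ)) := by
    simp only [smul_mul_assoc, mul_smul_comm, Matrix.trace_smul, smul_eq_mul, mul_assoc]
  rw [htr]
  have h3 : (3:ℂ) ^ n ≠ 0 := pow_ne_zero _ (by norm_num)
  have h2 : (2:ℂ) ^ n ≠ 0 := pow_ne_zero _ (by norm_num)
  field_simp
end
end

section
/- Conditional-expectation identity for Goldreich–Levin-type queries (equation (4.17) in the proof of Lemma 4.4). Let O ∈ ℂ^{2^n × 2^n} be Hermitian with Pauli expansion O = Σ_{Q∈𝒫} c_Q Q. Fix T ⊆ {1,…,n}, a Pauli X ∈ 𝒫 with supp(X) ∩ T = ∅, and fixed values A_i ∈ {σ_x,σ_y,σ_z} and v_i ∈ {±1} for each i ∈ T. Then the average, over all choices of A_i ∈ {σ_x,σ_y,σ_z} and v_i ∈ {±1} for i ∉ T (each taken uniformly and independently), of 3^{|supp(X)|} · v^{supp(X)} · 1[X ⊆ A] · ⟨A,v| O |A,v⟩ equals Σ_{Q∈𝒫} c_Q · v^{supp(Q) ∩ T} · 1[Q_i ∈ {σ_I,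 A_i} for all i ∈ T, and Q_i = X_i for all i ∉ T]. -/
open Complex Matrix
open scoped BigOperators Classical

noncomputable section

lemma ite_inst_irrel {α : Sort*} {p q : Prop} (h1 : Decidable p) (h2 : Decidable q)
    (hpq : p ↔ q) (a b : α) : (@ite _ p h1 a b) = (@ite _ q h2 a b) := by
  cases propext hpq
  cases Subsingleton.elim h1 h2
  rfl

def sgnC (b : Bool) : ℂ := if b then 1 else -1

def qf (a : Fin 3) (b : Bool) (q : Fin 4) : ℂ :=
  ∑ s : Fin 2, ∑ t : Fin 2,
    (starRingEnd ℂ) (eig1 a b s) * (pauli1 q s t * eig1 a b t)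

lemma sqrt2_sq : ((Real.sqrt 2 : ℝ) : ℂ) ^ 2 = 2 := by
  norm_cast
  rw [Real.sq_sqrt (by norm_num)]

lemma qf_eval (a : Fin 3) (b : Bool) (q : Fin 4) :
    qf a b q = if q = 0 then 1 else if q = a.succ then sgnC b else 0 := by
  have hs := sqrt2_sq
  fin_cases a <;> fin_cases q <;> cases b <;>
    simp [qf, eig1, pauli1, sgnC, Fin.sum_univ_two, Matrix.one_apply, Fin.succ] <;>
    ring_nf <;>
    simp [hs] <;>
    norm_num

lemma quadform_pauli {n : ℕ} (A : Fin n → Fin 3) (v : Fin n → Bool) (Q : Fin n → Fin 4) :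
    star (eigvec A v) ⬝ᵥ (PauliOp Q).mulVec (eigvec A v)
      = ∏ i, qf (A i) (v i) (Q i) := by
  have lhs_eq : star (eigvec A v) ⬝ᵥ (PauliOp Q).mulVec (eigvec A v)
      = ∑ x : Fin n → Fin 2, ∑ y : Fin n → Fin 2,
          ∏ i, ((starRingEnd ℂ) (eig1 (A i) (v i) (x i))
            * (pauli1 (Q i) (x i) (y i) * eig1 (A i) (v i) (y i))) := by
    simp only [dotProduct, Matrix.mulVec, dotProduct, Pi.star_apply, eigvec, PauliOp,
      Matrix.of_apply, Finset.mul_sum]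
    refine Finset.sum_congr rfl fun x _ => Finset.sum_congr rfl fun y _ => ?_
    rw [show (star (∏ i, eig1 (A i) (v i) (x i)) : ℂ)
        = ∏ i, (starRingEnd ℂ) (eig1 (A i) (v i) (x i)) from map_prod (starRingEnd ℂ) _ _,
      ← Finset.prod_mul_distrib, ← Finset.prod_mul_distrib]
  rw [lhs_eq]
  have h1 : ∀ x : Fin n → Fin 2,
      (∑ y : Fin n → Fin 2, ∏ i, ((starRingEnd ℂ) (eig1 (A i) (v i) (x i))
        * (pauli1 (Q i) (x i) (y i) * eig1 (A i) (v i) (y i))))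
      = ∏ i, ∑ t : Fin 2, ((starRingEnd ℂ) (eig1 (A i) (v i) (x i))
        * (pauli1 (Q i) (x i) t * eig1 (A i) (v i) t)) := by
    intro x
    rw [Finset.prod_univ_sum, Fintype.piFinset_univ]
  simp only [h1]
  rw [show (∑ x : Fin n → Fin 2, ∏ i, ∑ t : Fin 2, ((starRingEnd ℂ) (eig1 (A i) (v i) (x i))
        * (pauli1 (Q i) (x i) t * eig1 (A i) (v i) t)))
      = ∏ i, ∑ s : Fin 2, ∑ t : Fin 2, ((starRingEnd ℂ) (eig1 (A i) (v i) s)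
        * (pauli1 (Q i) s t * eig1 (A i) (v i) t)) from
    (by rw [Finset.prod_univ_sum, Fintype.piFinset_univ])]
  rfl

lemma sum_h (x q : Fin 4) (qv : Fin 3 → Bool → ℂ)
    (hqv : ∀ a b, qv a b = if q = 0 then 1 else if q = a.succ then sgnC b else 0) :
    ∑ a : Fin 3, ∑ b : Bool,
      ((if x = 0 then 1 else 3) * ((if x = 0 then 1 else sgnC b)
        * ((if x = 0 ∨ x = a.succ then (1:ℂ) else 0) * qv a b)))
    = 6 * (if q = x then 1 else 0) := by
  simp only [hqv]
  fin_cases x <;> fin_cases q <;>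
    simp [Fin.sum_univ_three, sgnC, Fintype.sum_bool, Fin.succ] <;> norm_num

lemma dot_quad_sum {m : Type*} [Fintype m] [DecidableEq m] (ψ : m → ℂ) {ι : Type*}
    (s : Finset ι) (M : ι → Matrix m m ℂ) (co : ι → ℂ) :
    star ψ ⬝ᵥ (∑ Q ∈ s, co Q • M Q).mulVec ψ
      = ∑ Q ∈ s, co Q * (star ψ ⬝ᵥ (M Q).mulVec ψ) := by
  classical
  induction s using Finset.induction_on with
  | empty => simp
  | insert _ _ hx ih =>
      rw [Finset.sum_insert hx, Finset.sum_insert hx, Matrix.add_mulVec, dotProduct_add,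
        Matrix.smul_mulVec, dotProduct_smul, smul_eq_mul, ih]

lemma keyQ {n : ℕ} (T : Finset (Fin n)) (X : Fin n → Fin 4) (hX : psupp X ∩ T = ∅)
    (A0 : Fin n → Fin 3) (v0 : Fin n → Bool) (Q : Fin n → Fin 4) :
    ((3 ^ Tᶜ.card * 2 ^ Tᶜ.card : ℂ))⁻¹ *
      ∑ A ∈ Finset.univ.filter (fun A : Fin n → Fin 3 => ∀ i ∈ T, A i = A0 i),
        ∑ v ∈ Finset.univ.filter (fun v : Fin n → Bool => ∀ i ∈ T, v i = v0 i),
          (3 : ℂ) ^ (psupp X).card * (sgnProd (psupp X) v : ℂ)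
            * (if ∀ i, X i = 0 ∨ X i = (A i).succ then 1 else 0)
            * ∏ i, qf (A i) (v i) (Q i)
    = (sgnProd (psupp Q ∩ T) v0 : ℂ)
        * (if (∀ i ∈ T, Q i = 0 ∨ Q i = (A0 i).succ) ∧ (∀ i ∉ T, Q i = X i)
            then 1 else 0) := by
  classical
  have hXT : ∀ i ∈ T, X i = 0 := by
    intro i hi
    by_contra h
    have : i ∈ psupp X ∩ T := by
      simp [psupp, Finset.mem_inter, h, hi]
    rw [hX] at this
    exact absurd this (Finset.notMem_empty i)
  set h : Fin n → Fin 3 → Bool → ℂ := fun i a b =>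
    (if X i = 0 then 1 else 3) * ((if X i = 0 then 1 else sgnC b)
      * ((if X i = 0 ∨ X i = a.succ then (1:ℂ) else 0) * qf a b (Q i))) with hh
  have e1 : (3:ℂ) ^ (psupp X).card = ∏ i, (if X i = 0 then (1:ℂ) else 3) := by
    rw [Finset.prod_ite, Finset.prod_const, Finset.prod_const, one_pow, one_mul, psupp]
  have e2 : ∀ v : Fin n → Bool,
      ((sgnProd (psupp X) v : ℝ) : ℂ) = ∏ i, (if X i = 0 then 1 else sgnC (v i)) := by
    intro v
    rw [sgnProd, Complex.ofReal_prod, psupp, Finset.prod_filter]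
    refine Finset.prod_congr rfl fun i _ => ?_
    by_cases hx : X i = 0 <;> cases hv : v i <;> simp [hx, sgn, sgnC]
  have esummand : ∀ (A : Fin n → Fin 3) (v : Fin n → Bool),
      (3 : ℂ) ^ (psupp X).card * (sgnProd (psupp X) v : ℂ)
        * (if ∀ i, X i = 0 ∨ X i = (A i).succ then 1 else 0)
        * ∏ i, qf (A i) (v i) (Q i)
      = ∏ i, h i (A i) (v i) := by
    intro A v
    rw [e1, e2, show (if ∀ i, X i = 0 ∨ X i = (A i).succ then (1:ℂ) else 0)
        = ∏ i, (if X i = 0 ∨ X i = (A i).succ then (1:ℂ) else 0) by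
      rw [Fintype.prod_boole]
      exact ite_inst_irrel _ _ Iff.rfl _ _,
      ← Finset.prod_mul_distrib, ← Finset.prod_mul_distrib, ← Finset.prod_mul_distrib]
    exact Finset.prod_congr rfl fun i _ => by ring
  have hAset : (Finset.univ.filter (fun A : Fin n → Fin 3 => ∀ i ∈ T, A i = A0 i))
      = Fintype.piFinset (fun i => if i ∈ T then {A0 i} else Finset.univ) := by
    ext A
    simp only [Finset.mem_filter, Finset.mem_univ, true_and, Fintype.mem_piFinset]
    constructor
    · intro hA i
      by_cases hi : i ∈ T <;> simp [hi, hA]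
    · intro hA i hi
      have := hA i
      simpa [hi] using this
  have hvset : (Finset.univ.filter (fun v : Fin n → Bool => ∀ i ∈ T, v i = v0 i))
      = Fintype.piFinset (fun i => if i ∈ T then {v0 i} else Finset.univ) := by
    ext v
    simp only [Finset.mem_filter, Finset.mem_univ, true_and, Fintype.mem_piFinset]
    constructor
    · intro hv i
      by_cases hi : i ∈ T <;> simp [hi, hv]
    · intro hv i hi
      have := hv i
      simpa [hi] using this
  rw [hAset, hvset]
  have hdouble : (∑ A ∈ Fintype.piFinset (fun i => if i ∈ T then {A0 i} else Finset.univ),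
      ∑ v ∈ Fintype.piFinset (fun i => if i ∈ T then {v0 i} else Finset.univ),
        (3 : ℂ) ^ (psupp X).card * (sgnProd (psupp X) v : ℂ)
          * (if ∀ i, X i = 0 ∨ X i = (A i).succ then 1 else 0)
          * ∏ i, qf (A i) (v i) (Q i))
      = ∏ i, ∑ a ∈ (if i ∈ T then {A0 i} else Finset.univ),
          ∑ b ∈ (if i ∈ T then ({v0 i} : Finset Bool) else Finset.univ), h i a b := by
    rw [Finset.prod_univ_sum (fun i => if i ∈ T then {A0 i} else Finset.univ)
      (fun i a => ∑ b ∈ (if i ∈ T then ({v0 i} : Finset Bool) else Finset.univ), h i a b)]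
    refine Finset.sum_congr rfl fun A _ => ?_
    rw [Finset.prod_univ_sum (fun i => if i ∈ T then ({v0 i} : Finset Bool) else Finset.univ)
      (fun i b => h i (A i) b)]
    exact Finset.sum_congr rfl fun v _ => esummand A v
  rw [hdouble]
  have hE : ∀ i, (∑ a ∈ (if i ∈ T then {A0 i} else Finset.univ),
      ∑ b ∈ (if i ∈ T then ({v0 i} : Finset Bool) else Finset.univ), h i a b)
      = if i ∈ T then (if Q i = 0 then 1 else if Q i = (A0 i).succ then sgnC (v0 i) else 0)
        else 6 * (if Q i = X i then 1 else 0) := by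
    intro i
    by_cases hi : i ∈ T
    · have hx0 := hXT i hi
      simp [hi, hh, hx0, qf_eval]
    · simp only [hi, if_neg, if_false]
      rw [hh]
      exact sum_h (X i) (Q i) (fun a b => qf a b (Q i)) (fun a b => qf_eval a b (Q i))
  simp only [hE]
  rw [← Finset.prod_mul_prod_compl T]
  have hT1 : (∏ i ∈ T, if i ∈ T then (if Q i = 0 then (1:ℂ)
        else if Q i = (A0 i).succ then sgnC (v0 i) else 0)
        else 6 * (if Q i = X i then 1 else 0))
      = (sgnProd (psupp Q ∩ T) v0 : ℂ)
        * (if ∀ i ∈ T, Q i = 0 ∨ Q i = (A0 i).succ then 1 else 0) := by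
    have hpt : ∀ i ∈ T, (if i ∈ T then (if Q i = 0 then (1:ℂ)
        else if Q i = (A0 i).succ then sgnC (v0 i) else 0)
        else 6 * (if Q i = X i then 1 else 0))
        = (if Q i = 0 then 1 else sgnC (v0 i))
          * (if Q i = 0 ∨ Q i = (A0 i).succ then 1 else 0) := by
      intro i hi
      by_cases h0 : Q i = 0
      · simp [hi, h0]
      · by_cases h1 : Q i = (A0 i).succ <;> simp [hi, h0, h1]
    rw [Finset.prod_congr rfl hpt, Finset.prod_mul_distrib, Finset.prod_boole]
    congr 1
    · have hset : psupp Q ∩ T = T.filter (fun i => ¬ Q i = 0) := by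
        ext i
        simp [psupp, and_comm]
      rw [hset, sgnProd, Complex.ofReal_prod, Finset.prod_filter]
      refine Finset.prod_congr rfl fun i _ => ?_
      by_cases h0 : Q i = 0 <;> cases hv : v0 i <;> simp [h0, sgn, sgnC]
    · exact ite_inst_irrel _ _ Iff.rfl _ _
  have hT2 : (∏ i ∈ Tᶜ, if i ∈ T then (if Q i = 0 then (1:ℂ)
        else if Q i = (A0 i).succ then sgnC (v0 i) else 0)
        else 6 * (if Q i = X i then 1 else 0))
      = 6 ^ Tᶜ.card * (if ∀ i ∉ T, Q i = X i then 1 else 0) := by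
    have hpt : ∀ i ∈ Tᶜ, (if i ∈ T then (if Q i = 0 then (1:ℂ)
        else if Q i = (A0 i).succ then sgnC (v0 i) else 0)
        else 6 * (if Q i = X i then 1 else 0))
        = 6 * (if Q i = X i then 1 else 0) := by
      intro i hi
      simp [Finset.mem_compl.mp hi]
    rw [Finset.prod_congr rfl hpt, Finset.prod_mul_distrib, Finset.prod_const,
      Finset.prod_boole]
    congr 1
    exact ite_inst_irrel _ _ (by simp [Finset.mem_compl]) _ _
  rw [hT1, hT2]
  have h6 : (6:ℂ) ^ Tᶜ.card * ((3:ℂ) ^ Tᶜ.card * 2 ^ Tᶜ.card)⁻¹ = 1 := by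
    rw [← mul_pow, show (3:ℂ) * 2 = 6 by norm_num]
    exact mul_inv_cancel₀ (pow_ne_zero _ (by norm_num))
  have hind : (if ∀ i ∈ T, Q i = 0 ∨ Q i = (A0 i).succ then (1:ℂ) else 0)
      * (if ∀ i ∉ T, Q i = X i then (1:ℂ) else 0)
      = if (∀ i ∈ T, Q i = 0 ∨ Q i = (A0 i).succ) ∧ (∀ i ∉ T, Q i = X i)
          then (1:ℂ) else 0 := by
    by_cases hp1 : ∀ i ∈ T, Q i = 0 ∨ Q i = (A0 i).succ
    · by_cases hp2 : ∀ i ∉ T, Q i = X i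
      · rw [if_pos hp1, if_pos hp2, if_pos ⟨hp1, hp2⟩, one_mul]
      · rw [if_neg hp2, if_neg (show ¬((∀ i ∈ T, Q i = 0 ∨ Q i = (A0 i).succ)
            ∧ (∀ i ∉ T, Q i = X i)) from fun hcon => hp2 hcon.2), mul_zero]
    · rw [if_neg hp1, if_neg (show ¬((∀ i ∈ T, Q i = 0 ∨ Q i = (A0 i).succ)
            ∧ (∀ i ∉ T, Q i = X i)) from fun hcon => hp1 hcon.1), zero_mul]
  calc ((3 ^ Tᶜ.card * 2 ^ Tᶜ.card : ℂ))⁻¹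
        * ((sgnProd (psupp Q ∩ T) v0 : ℂ)
            * (if ∀ i ∈ T, Q i = 0 ∨ Q i = (A0 i).succ then 1 else 0)
          * (6 ^ Tᶜ.card * (if ∀ i ∉ T, Q i = X i then 1 else 0)))
      = ((6:ℂ) ^ Tᶜ.card * ((3:ℂ) ^ Tᶜ.card * 2 ^ Tᶜ.card)⁻¹)
        * ((sgnProd (psupp Q ∩ T) v0 : ℂ)
          * ((if ∀ i ∈ T, Q i = 0 ∨ Q i = (A0 i).succ then 1 else 0)
            * (if ∀ i ∉ T, Q i = X i then 1 else 0))) := by ring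
    _ = _ := by rw [h6, hind, one_mul]

/-- equation (4.17) in the proof of Lemma 4.4: conditional-expectation
identity for Goldreich–Levin-type queries.  The average is over the choices of basis and
sign on the qubits outside `T` (the fixed values on `T` are those of `A0`, `v0`). -/
theorem gl_conditional_expectation (n : ℕ) (O : QMat n) (hO : O.IsHermitian)
    (c : (Fin n → Fin 4) → ℝ) (hc : O = ∑ Q, (c Q : ℂ) • PauliOp Q)
    (T : Finset (Fin n)) (X : Fin n → Fin 4) (hX : psupp X ∩ T = ∅)
    (A0 : Fin n → Fin 3) (v0 : Fin n → Bool) :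
    ((3 ^ Tᶜ.card * 2 ^ Tᶜ.card : ℂ))⁻¹ *
        ∑ A ∈ Finset.univ.filter (fun A : Fin n → Fin 3 => ∀ i ∈ T, A i = A0 i),
          ∑ v ∈ Finset.univ.filter (fun v : Fin n → Bool => ∀ i ∈ T, v i = v0 i),
            (3 : ℂ) ^ (psupp X).card * (sgnProd (psupp X) v : ℂ)
              * (if ∀ i, X i = 0 ∨ X i = (A i).succ then 1 else 0)
              * (star (eigvec A v) ⬝ᵥ O.mulVec (eigvec A v))
      = ∑ Q : Fin n → Fin 4,
          (c Q : ℂ) * (sgnProd (psupp Q ∩ T) v0 : ℂ)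
            * (if (∀ i ∈ T, Q i = 0 ∨ Q i = (A0 i).succ) ∧ (∀ i ∉ T, Q i = X i)
                then 1 else 0) := by
  classical
  have expand : ∀ (A : Fin n → Fin 3) (v : Fin n → Bool),
      star (eigvec A v) ⬝ᵥ O.mulVec (eigvec A v)
        = ∑ Q : Fin n → Fin 4, (c Q : ℂ) * ∏ i, qf (A i) (v i) (Q i) := by
    intro A v
    rw [hc, dot_quad_sum]
    exact Finset.sum_congr rfl fun Q _ => by rw [quadform_pauli]
  have step1 : (∑ A ∈ Finset.univ.filter (fun A : Fin n → Fin 3 => ∀ i ∈ T, A i = A0 i),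
          ∑ v ∈ Finset.univ.filter (fun v : Fin n → Bool => ∀ i ∈ T, v i = v0 i),
            (3 : ℂ) ^ (psupp X).card * (sgnProd (psupp X) v : ℂ)
              * (if ∀ i, X i = 0 ∨ X i = (A i).succ then 1 else 0)
              * (star (eigvec A v) ⬝ᵥ O.mulVec (eigvec A v)))
      = ∑ Q : Fin n → Fin 4,
          (c Q : ℂ) * ∑ A ∈ Finset.univ.filter (fun A : Fin n → Fin 3 => ∀ i ∈ T, A i = A0 i),
            ∑ v ∈ Finset.univ.filter (fun v : Fin n → Bool => ∀ i ∈ T, v i = v0 i),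
              (3 : ℂ) ^ (psupp X).card * (sgnProd (psupp X) v : ℂ)
                * (if ∀ i, X i = 0 ∨ X i = (A i).succ then 1 else 0)
                * ∏ i, qf (A i) (v i) (Q i) := by
    have e : ∀ (A : Fin n → Fin 3) (v : Fin n → Bool),
        (3 : ℂ) ^ (psupp X).card * (sgnProd (psupp X) v : ℂ)
          * (if ∀ i, X i = 0 ∨ X i = (A i).succ then 1 else 0)
          * (star (eigvec A v) ⬝ᵥ O.mulVec (eigvec A v))
        = ∑ Q : Fin n → Fin 4, (c Q : ℂ)
            * ((3 : ℂ) ^ (psupp X).card * (sgnProd (psupp X) v : ℂ)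
              * (if ∀ i, X i = 0 ∨ X i = (A i).succ then 1 else 0)
              * ∏ i, qf (A i) (v i) (Q i)) := by
      intro A v
      rw [expand A v, Finset.mul_sum]
      exact Finset.sum_congr rfl fun Q _ => by ring
    calc (∑ A ∈ Finset.univ.filter (fun A : Fin n → Fin 3 => ∀ i ∈ T, A i = A0 i),
          ∑ v ∈ Finset.univ.filter (fun v : Fin n → Bool => ∀ i ∈ T, v i = v0 i),
            (3 : ℂ) ^ (psupp X).card * (sgnProd (psupp X) v : ℂ)
              * (if ∀ i, X i = 0 ∨ X i = (A i).succ then 1 else 0)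
              * (star (eigvec A v) ⬝ᵥ O.mulVec (eigvec A v)))
        = ∑ A ∈ Finset.univ.filter (fun A : Fin n → Fin 3 => ∀ i ∈ T, A i = A0 i),
            ∑ v ∈ Finset.univ.filter (fun v : Fin n → Bool => ∀ i ∈ T, v i = v0 i),
              ∑ Q : Fin n → Fin 4, (c Q : ℂ)
                * ((3 : ℂ) ^ (psupp X).card * (sgnProd (psupp X) v : ℂ)
                  * (if ∀ i, X i = 0 ∨ X i = (A i).succ then 1 else 0)
                  * ∏ i, qf (A i) (v i) (Q i)) := by
          exact Finset.sum_congr rfl fun A _ => Finset.sum_congr rfl fun v _ => e A v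
      _ = ∑ A ∈ Finset.univ.filter (fun A : Fin n → Fin 3 => ∀ i ∈ T, A i = A0 i),
            ∑ Q : Fin n → Fin 4,
              ∑ v ∈ Finset.univ.filter (fun v : Fin n → Bool => ∀ i ∈ T, v i = v0 i),
                (c Q : ℂ)
                * ((3 : ℂ) ^ (psupp X).card * (sgnProd (psupp X) v : ℂ)
                  * (if ∀ i, X i = 0 ∨ X i = (A i).succ then 1 else 0)
                  * ∏ i, qf (A i) (v i) (Q i)) := by
          exact Finset.sum_congr rfl fun A _ => Finset.sum_comm
      _ = ∑ Q : Fin n → Fin 4,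
            ∑ A ∈ Finset.univ.filter (fun A : Fin n → Fin 3 => ∀ i ∈ T, A i = A0 i),
              ∑ v ∈ Finset.univ.filter (fun v : Fin n → Bool => ∀ i ∈ T, v i = v0 i),
                (c Q : ℂ)
                * ((3 : ℂ) ^ (psupp X).card * (sgnProd (psupp X) v : ℂ)
                  * (if ∀ i, X i = 0 ∨ X i = (A i).succ then 1 else 0)
                  * ∏ i, qf (A i) (v i) (Q i)) := Finset.sum_comm
      _ = _ := by
          refine Finset.sum_congr rfl fun Q _ => ?_
          rw [Finset.mul_sum]
          exact Finset.sum_congr rfl fun A _ => (Finset.mul_sum _ _ _).symm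
  rw [step1, Finset.mul_sum]
  refine Finset.sum_congr rfl fun Q _ => ?_
  rw [mul_left_comm, keyQ T X hX A0 v0 Q, ← mul_assoc]
end
end

section
/- Effective sparsity bound for power-law Hamiltonians (Lemma 5.4, with an explicit constant). Let d, k ≥ 1 be integers and α > d a real number. Let x_1,…,x_n be distinct points of ℤ^d with dist(i,j) := ‖x_i − x_j‖₁, and let H = Σ_{a=1}^m λ_a E_a be a k-local Hamiltonian on n qubits exhibiting α-power law decay, i.e. for all i, j ∈ [n]: Σ_{a : i ∈ supp(E_a) and j ∈ supp(E_a)} |λ_a| ≤ 1/max(1, dist(i,j))^α. Then for every ε > 0 with ε·(α−d) ≤ 1, the effective sparsity satisfies 𝔰_ε ≤ 2·6^{(d+1)k} / (ε(α−d))^{dk/(dk+(α−d))}. -/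
open Complex Matrix
open scoped BigOperators Classical

noncomputable section

/-- Commutator `[A, B] = A*B - B*A`. -/
def cm {α : Type*} [Ring α] (A B : α) : α := A * B - B * A

/-- Frobenius norm of a complex square matrix. -/
def frobNorm {m : Type*} [Fintype m] (M : Matrix m m ℂ) : ℝ :=
  Real.sqrt (∑ x, ∑ y, ‖M x y‖ ^ 2)

/-- Matrix exponential. -/
def mexp {m : Type*} [Fintype m] [DecidableEq m] (M : Matrix m m ℂ) : Matrix m m ℂ :=
  NormedSpace.exp M

/-- The coefficient of the Pauli `p` in the Pauli expansion `M = Σ_Q c_Q Q`. -/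
def pauliCoeff {n : ℕ} (M : QMat n) (p : Fin n → Fin 4) : ℂ :=
  Matrix.trace (M * PauliOp p) / (2 ^ n : ℂ)

/-- The local norm `‖M‖₍₁₎ = max_i Σ_{Q : i ∈ supp(Q)} |c_Q|`. -/
def lonorm {n : ℕ} (M : QMat n) : ℝ :=
  ⨆ i : Fin n, ∑ p : Fin n → Fin 4,
    if i ∈ psupp p then ‖pauliCoeff M p‖ else 0

/-- The local norm `‖M‖₍₂₎ = max_i (Σ_{Q : i ∈ supp(Q)} |c_Q|²)^{1/2}`. -/
def ltnorm {n : ℕ} (M : QMat n) : ℝ :=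
  ⨆ i : Fin n, Real.sqrt (∑ p : Fin n → Fin 4,
    if i ∈ psupp p then ‖pauliCoeff M p‖ ^ 2 else 0)

/-- `H` is the Hamiltonian `Σ_a λ_a E_a` with distinct non-identity Pauli terms. -/
def IsHamiltonian {n m : ℕ} (lam : Fin m → ℝ) (E : Fin m → Fin n → Fin 4) (H : QMat n) : Prop :=
  Function.Injective E ∧ (∀ a, E a ≠ fun _ => 0) ∧ H = ∑ a, (lam a : ℂ) • PauliOp (E a)

/-- Every term of the Hamiltonian has support of size at most `k`. -/
def KLocal {n m : ℕ} (E : Fin m → Fin n → Fin 4) (k : ℕ) : Prop :=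
  ∀ a, (psupp (E a)).card ≤ k

/-- The effective sparsity `𝔰_ε` of the Hamiltonian with coefficients `lam` and terms `E`:
`max(1, max_i Σ_{a : i ∈ supp(E_a)} min(1, λ_a²/ε²))`. -/
def effSparsity {n m : ℕ} (lam : Fin m → ℝ) (E : Fin m → Fin n → Fin 4) (ε : ℝ) : ℝ :=
  max 1 (⨆ i : Fin n,
    ∑ a ∈ Finset.univ.filter (fun a => i ∈ psupp (E a)), min 1 (lam a ^ 2 / ε ^ 2))


section PLSHelpers
open Real

lemma perterm (β a : ℝ) (hβ : 0 < β) (ha : 1 ≤ a) :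
    (a+1) ^ (-(β+1)) ≤ (a ^ (-β) - (a+1) ^ (-β)) / β := by
  have ha0 : (0:ℝ) < a := lt_of_lt_of_le one_pos ha
  have hane : a ≠ 0 := ne_of_gt ha0
  set b : ℝ := a + 1 with hb
  have hb0 : (0:ℝ) < b := by positivity
  have hbne : b ≠ 0 := ne_of_gt hb0
  have hb1 : (1:ℝ) < b := by rw [hb]; linarith
  have key : b + β ≤ b * (b/a) ^ β := by
    rcases le_or_gt 1 β with h1 | h1
    · have h1a : (0:ℝ) < 1/a := by positivity
      have hber := one_add_mul_self_le_rpow_one_add (by linarith : (-1:ℝ) ≤ 1/a) h1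
      have h2 : 1 + 1/a = b/a := by field_simp; exact hb.symm
      rw [h2] at hber
      have h4 : (1:ℝ) ≤ b/a := by rw [le_div_iff₀ ha0]; linarith
      calc b + β = b + β * 1 := by ring
        _ ≤ b + β * (b/a) := by nlinarith
        _ = b * (1 + β * (1/a)) := by field_simp
        _ ≤ b * ((b/a) ^ β) := mul_le_mul_of_nonneg_left hber hb0.le
    · have h1b : 1/b ≤ 1 := by rw [div_le_one hb0]; linarith
      have h1b0 : (0:ℝ) < 1/b := by positivity
      have hber := rpow_one_add_le_one_add_mul_self (s := -(1/b))
        (by linarith : (-1:ℝ) ≤ -(1/b)) hβ.le h1.le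
      have h2 : 1 + -(1/b) = a/b := by field_simp; linarith
      rw [h2] at hber
      have hab0 : (0:ℝ) < (a/b)^β := rpow_pos_of_pos (by positivity) β
      have hinv : (b/a) ^ β = ((a/b)^β)⁻¹ := by
        rw [show b/a = (a/b)⁻¹ by field_simp, ← Real.inv_rpow (by positivity)]
      rw [hinv]
      have hβb : β < b := lt_of_le_of_lt h1.le hb1
      have h5 : (a/b)^β ≤ (b - β)/b := by
        have e : 1 + β * -(1/b) = (b-β)/b := by field_simp; ring
        rw [e] at hber; exact hber
      have h6 : ((b-β)/b)⁻¹ ≤ ((a/b)^β)⁻¹ := inv_anti₀ hab0 h5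
      have h7 : ((b-β)/b)⁻¹ = b/(b-β) := by rw [inv_div]
      have h8 : b + β ≤ b * (b/(b-β)) := by
        rw [← mul_div_assoc, le_div_iff₀ (by linarith : (0:ℝ) < b - β)]
        nlinarith
      calc b + β ≤ b * (b/(b-β)) := h8
        _ = b * ((b-β)/b)⁻¹ := by rw [h7]
        _ ≤ b * ((a/b)^β)⁻¹ := mul_le_mul_of_nonneg_left h6 hb0.le
  rw [le_div_iff₀ hβ]
  have e1 : a ^ (-β) = (b/a)^β * b^(-β) := by
    rw [Real.div_rpow hb0.le ha0.le, Real.rpow_neg hb0.le, Real.rpow_neg ha0.le]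
    field_simp
  have e2 : b ^ (-(β+1)) = b^(-β) * b⁻¹ := by
    rw [show -(β+1) = -β + (-1) by ring, Real.rpow_add hb0, Real.rpow_neg_one]
  have hbβ : (0:ℝ) < b^(-β) := rpow_pos_of_pos hb0 _
  have hbi : (0:ℝ) < b⁻¹ := by positivity
  rw [e1, e2]
  have h11 := mul_le_mul_of_nonneg_left key (mul_pos hbβ hbi).le
  have e3 : b⁻¹ * b = 1 := inv_mul_cancel₀ hbne
  have h10 : b ^ (-β) * b⁻¹ * (b * (b/a)^β) = (b/a)^β * b^(-β) := by
    calc b ^ (-β) * b⁻¹ * (b * (b/a)^β) = (b/a)^β * b^(-β) * (b⁻¹ * b) := by ring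
      _ = (b/a)^β * b^(-β) := by rw [e3, mul_one]
  have h13 : b ^ (-β) * b⁻¹ * (b+β) = b^(-β) + b^(-β) * b⁻¹ * β := by
    calc b ^ (-β) * b⁻¹ * (b+β) = b^(-β) * (b⁻¹ * b) + b^(-β) * b⁻¹ * β := by ring
      _ = b^(-β) + b^(-β) * b⁻¹ * β := by rw [e3, mul_one]
  linarith [h11, h10 ▸ h11, h13]

lemma tele (β : ℝ) (hβ : 0 < β) (R : ℕ) (hR : 1 ≤ R) (M : ℕ) :
    ∑ r ∈ Finset.Icc (R+1) M, ((r:ℝ)) ^ (-(β+1)) ≤ (R:ℝ)^(-β)/β := by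
  have main : ∀ M : ℕ, ∑ r ∈ Finset.Icc (R+1) M, ((r:ℝ)) ^ (-(β+1))
      ≤ ((R:ℝ)^(-β) - ((max R M : ℕ):ℝ)^(-β))/β := by
    intro M
    induction M with
    | zero =>
      rw [Finset.Icc_eq_empty (by omega)]
      simp [Nat.max_eq_left (Nat.zero_le R)]
    | succ M ih =>
      rcases le_or_gt (R+1) (M+1) with h | h
      · have hRM : R ≤ M := by omega
        rw [Finset.sum_Icc_succ_top h]
        have hmax1 : max R (M+1) = M+1 := by omega
        have hmax2 : max R M = M := by omega
        rw [hmax1]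
        rw [hmax2] at ih
        have hM1 : (1:ℝ) ≤ (M:ℝ) := by exact_mod_cast le_trans hR hRM
        have hp := perterm β (M:ℝ) hβ hM1
        have hc : ((M+1:ℕ):ℝ) = (M:ℝ)+1 := by push_cast; ring
        rw [hc]
        rw [le_div_iff₀ hβ] at *
        linarith
      · rw [Finset.Icc_eq_empty (by omega)]
        have : max R (M+1) = R := by omega
        rw [this]
        simp
  have h2 := main M
  have h3 : (0:ℝ) ≤ ((max R M : ℕ):ℝ)^(-β) := rpow_nonneg (by positivity) _
  have h4 : ((R:ℝ)^(-β) - ((max R M : ℕ):ℝ)^(-β))/β ≤ (R:ℝ)^(-β)/β :=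
    (div_le_div_iff_of_pos_right hβ).mpr (by linarith)
  linarith

lemma signmem (a : ℤ) : a.sign ∈ Finset.Icc (-1:ℤ) 1 := by
  rcases lt_trichotomy a 0 with h | h | h
  · simp [Int.sign_eq_neg_one_of_neg h]
  · simp [h]
  · simp [Int.sign_eq_one_of_pos h]

lemma boxcount (d n : ℕ) (x : Fin n → Fin d → ℤ) (hx : Function.Injective x) (i : Fin n)
    (R : ℕ) :
    (Finset.univ.filter fun j => (∑ r, (x i r - x j r).natAbs) ≤ R).card ≤ (2*R+1)^d := by
  classical
  have hcard : (Finset.Icc (-(R:ℤ)) R).card = 2*R+1 := by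
    rw [Int.card_Icc]; omega
  have h : (Finset.univ.filter fun j => (∑ r, (x i r - x j r).natAbs) ≤ R).card
      ≤ (Fintype.piFinset fun _ : Fin d => Finset.Icc (-(R:ℤ)) R).card := by
    apply Finset.card_le_card_of_injOn (fun j => fun r => x j r - x i r)
    · intro j hj
      rw [Finset.mem_coe, Finset.mem_filter] at hj
      rw [Finset.mem_coe, Fintype.mem_piFinset]
      intro r
      have h1 : (x i r - x j r).natAbs ≤ R := by
        refine le_trans ?_ hj.2
        exact Finset.single_le_sum (f := fun r => (x i r - x j r).natAbs)
          (fun _ _ => Nat.zero_le _) (Finset.mem_univ r)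
      rw [Finset.mem_Icc]
      dsimp only; omega
    · intro j _ j' _ hjj
      apply hx
      funext r
      have := congrFun hjj r
      simpa using this
  refine h.trans ?_
  rw [Fintype.card_piFinset]
  simp [hcard]

lemma spherecount (d' n : ℕ) (x : Fin n → Fin (d'+1) → ℤ) (hx : Function.Injective x)
    (i : Fin n) (r : ℕ) :
    (Finset.univ.filter fun j => (∑ s, (x i s - x j s).natAbs) = r).card
      ≤ 3 * (2*r+1)^d' := by
  classical
  have hcard : (Finset.Icc (-(r:ℤ)) r).card = 2*r+1 := by
    rw [Int.card_Icc]; omega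
  have hcard3 : (Finset.Icc (-1:ℤ) 1).card = 3 := by
    rw [Int.card_Icc]; rfl
  have h : (Finset.univ.filter fun j => (∑ s, (x i s - x j s).natAbs) = r).card
      ≤ ((Fintype.piFinset fun _ : Fin d' => Finset.Icc (-(r:ℤ)) r)
          ×ˢ Finset.Icc (-1:ℤ) 1).card := by
    apply Finset.card_le_card_of_injOn
      (fun j => (fun s : Fin d' => x j s.castSucc - x i s.castSucc,
        Int.sign (x j (Fin.last d') - x i (Fin.last d'))))
    · intro j hj
      rw [Finset.mem_coe, Finset.mem_filter] at hj
      rw [Finset.mem_coe, Finset.mem_product]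
      refine ⟨?_, signmem _⟩
      rw [Fintype.mem_piFinset]
      intro s
      show x j s.castSucc - x i s.castSucc ∈ Finset.Icc (-(r:ℤ)) r
      have h1 : (x i s.castSucc - x j s.castSucc).natAbs ≤ r := by
        rw [← hj.2]
        exact Finset.single_le_sum (f := fun s => (x i s - x j s).natAbs)
          (fun _ _ => Nat.zero_le _) (Finset.mem_univ _)
      rw [Finset.mem_Icc]
      omega
    · intro j hj j' hj' hjj
      rw [Finset.mem_coe, Finset.mem_filter] at hj hj'
      have h1 := congrArg Prod.fst hjj
      have h2 := congrArg Prod.snd hjj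
      simp only at h1 h2
      have hcs : ∀ s : Fin d', x j s.castSucc - x i s.castSucc
          = x j' s.castSucc - x i s.castSucc := fun s => congrFun h1 s
      have e1 : (∑ s : Fin d', (x i s.castSucc - x j s.castSucc).natAbs)
          + (x i (Fin.last d') - x j (Fin.last d')).natAbs = r := by
        rw [← hj.2, Fin.sum_univ_castSucc]
      have e2 : (∑ s : Fin d', (x i s.castSucc - x j' s.castSucc).natAbs)
          + (x i (Fin.last d') - x j' (Fin.last d')).natAbs = r := by
        rw [← hj'.2, Fin.sum_univ_castSucc]
      have e3 : (∑ s : Fin d', (x i s.castSucc - x j s.castSucc).natAbs)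
          = ∑ s : Fin d', (x i s.castSucc - x j' s.castSucc).natAbs := by
        apply Finset.sum_congr rfl
        intro s _
        have := hcs s
        omega
      have e5 : x j (Fin.last d') - x i (Fin.last d')
          = x j' (Fin.last d') - x i (Fin.last d') := by
        have n1 : (x j (Fin.last d') - x i (Fin.last d')).natAbs
            = (x j' (Fin.last d') - x i (Fin.last d')).natAbs := by omega
        have s1 := Int.sign_mul_natAbs (x j (Fin.last d') - x i (Fin.last d'))
        have s2 := Int.sign_mul_natAbs (x j' (Fin.last d') - x i (Fin.last d'))
        rw [← s1, ← s2, h2, n1]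
      apply hx
      funext s
      refine Fin.lastCases ?_ ?_ s
      · omega
      · intro s'
        have := hcs s'
        omega
  refine h.trans ?_
  rw [Finset.card_product, Fintype.card_piFinset]
  simp [hcard, hcard3]
  ring_nf
  omega

def enc (k : ℕ) (i : Fin n) (p : Fin n → Fin 4) : Fin k → Fin n × Fin 4 :=
  fun l =>
    if h : (l:ℕ) < ((Finset.univ.filter fun j => p j ≠ 0).sort (· ≤ ·)).length then
      (((Finset.univ.filter fun j => p j ≠ 0).sort (· ≤ ·)).get ⟨l, h⟩,
        p (((Finset.univ.filter fun j => p j ≠ 0).sort (· ≤ ·)).get ⟨l, h⟩))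
    else (i, 0)

lemma enc_aux {k : ℕ} {i : Fin n} {p q : Fin n → Fin 4}
    (hp : (Finset.univ.filter fun j => p j ≠ 0).card ≤ k)
    (h : enc k i p = enc k i q) : ∀ j, p j ≠ 0 → q j = p j := by
  intro j hj
  set Lp := ((Finset.univ.filter fun j => p j ≠ 0).sort (· ≤ ·)) with hLp
  have hjmem : j ∈ Lp := by
    rw [hLp, Finset.mem_sort]
    simp [hj]
  obtain ⟨lidx, hget⟩ := List.mem_iff_get.mp hjmem
  have hlen : Lp.length ≤ k := by
    rw [hLp, Finset.length_sort]; exact hp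
  have hlt : (lidx : ℕ) < k := lt_of_lt_of_le lidx.isLt hlen
  set l : Fin k := ⟨lidx, hlt⟩ with hl
  have hpl : enc k i p l = (j, p j) := by
    rw [enc]
    rw [dif_pos (show (l:ℕ) < Lp.length from lidx.isLt)]
    simp only [hl]
    congr 1 <;> rw [show (⟨lidx, lidx.isLt⟩ : Fin Lp.length) = lidx from rfl, hget]
  have hql := (congrFun h l).symm.trans hpl
  rw [enc] at hql
  by_cases h' : (l:ℕ) < ((Finset.univ.filter fun j => q j ≠ 0).sort (· ≤ ·)).length
  · rw [dif_pos h'] at hql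
    have h1 := congrArg Prod.fst hql
    have h2 := congrArg Prod.snd hql
    simp only at h1 h2
    rw [h1] at h2
    exact h2
  · rw [dif_neg h'] at hql
    have h2 := congrArg Prod.snd hql
    simp only at h2
    exact absurd h2.symm hj

lemma enc_injOn {k : ℕ} {i : Fin n} {p q : Fin n → Fin 4}
    (hp : (Finset.univ.filter fun j => p j ≠ 0).card ≤ k)
    (hq : (Finset.univ.filter fun j => q j ≠ 0).card ≤ k)
    (h : enc k i p = enc k i q) : p = q := by
  funext j
  by_cases hj : p j = 0
  · by_cases hj' : q j = 0
    · rw [hj, hj']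
    · exact enc_aux hq h.symm j hj'
  · exact (enc_aux hp h j hj).symm

lemma paulicount {m k : ℕ} (B : Finset (Fin n)) (i : Fin n) (hi : i ∈ B)
    (E : Fin m → Fin n → Fin 4) (hE : Function.Injective E)
    (hloc : ∀ a, (Finset.univ.filter fun j => E a j ≠ 0).card ≤ k)
    (A : Finset (Fin m)) (hA : ∀ a ∈ A, ∀ j, E a j ≠ 0 → j ∈ B) :
    A.card ≤ (4 * B.card)^k := by
  classical
  have h : A.card ≤ (Fintype.piFinset fun _ : Fin k =>
      B ×ˢ (Finset.univ : Finset (Fin 4))).card := by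
    apply Finset.card_le_card_of_injOn (fun a => enc k i (E a))
    · intro a ha
      rw [Finset.mem_coe, Fintype.mem_piFinset]
      intro l
      rw [Finset.mem_product]
      refine ⟨?_, Finset.mem_univ _⟩
      dsimp only; rw [enc]
      by_cases h' : (l:ℕ) < ((Finset.univ.filter fun j => E a j ≠ 0).sort (· ≤ ·)).length
      · rw [dif_pos h']
        apply hA a ha
        have := List.get_mem ((Finset.univ.filter fun j => E a j ≠ 0).sort (· ≤ ·)) ⟨_, h'⟩
        rw [Finset.mem_sort (· ≤ ·)] at this
        simpa using this
      · rw [dif_neg h']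
        exact hi
    · intro a ha a' ha' haa
      exact hE (enc_injOn (hloc a) (hloc a') haa)
  refine h.trans ?_
  rw [Fintype.card_piFinset]
  simp [mul_comm]

end PLSHelpers

set_option maxHeartbeats 2000000 in
/-- Lemma 5.4, with an explicit constant: effective sparsity bound for
power-law Hamiltonians on (an embedded copy of) the lattice `ℤ^d`, with `ℓ¹` distance. -/
theorem power_law_effective_sparsity (d k : ℕ) (hd : 1 ≤ d) (hk : 1 ≤ k)
    (α : ℝ) (hα : (d : ℝ) < α)
    (n m : ℕ) (x : Fin n → Fin d → ℤ) (hx : Function.Injective x)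
    (lam : Fin m → ℝ) (E : Fin m → Fin n → Fin 4) (H : QMat n)
    (hH : IsHamiltonian lam E H) (hloc : KLocal E k)
    (hdecay : ∀ i j : Fin n,
      (∑ a ∈ Finset.univ.filter (fun a => i ∈ psupp (E a) ∧ j ∈ psupp (E a)), |lam a|)
        ≤ 1 / (max 1 ((∑ r, (x i r - x j r).natAbs : ℕ) : ℝ)) ^ α)
    (ε : ℝ) (hε : 0 < ε) (hε1 : ε * (α - (d : ℝ)) ≤ 1) :
    effSparsity lam E ε
      ≤ 2 * 6 ^ ((d + 1) * k) /
          (ε * (α - (d : ℝ))) ^ (((d * k : ℕ) : ℝ) / ((d * k : ℕ) + (α - (d : ℝ)))) := by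
  classical
  obtain ⟨hE, -, -⟩ := hH
  replace hloc : ∀ a, (psupp (E a)).card ≤ k := hloc
  obtain ⟨d', rfl⟩ : ∃ d', d = d' + 1 := ⟨d - 1, by omega⟩
  set β : ℝ := α - ((d' + 1 : ℕ) : ℝ) with hβdef
  have hβ : 0 < β := by rw [hβdef]; linarith
  set t : ℝ := ε * β with htdef
  have ht0 : 0 < t := mul_pos hε hβ
  have ht1 : t ≤ 1 := hε1
  set D : ℕ := (d' + 1) * k with hDdef
  have hD1 : 1 ≤ D := Nat.one_le_iff_ne_zero.mpr (Nat.mul_ne_zero (by omega) (by omega))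
  have hDβ : 0 < (D : ℝ) + β := by positivity
  set θ : ℝ := (D : ℝ) / ((D : ℝ) + β) with hθdef
  have hθ0 : 0 ≤ θ := by positivity
  have htθ : 0 < t ^ θ := Real.rpow_pos_of_pos ht0 θ
  have htθ1 : t ^ θ ≤ 1 := Real.rpow_le_one ht0.le ht1 hθ0
  set u : ℝ := -(1 : ℝ) / ((D : ℝ) + β) with hudef
  set s : ℝ := t ^ u with hsdef
  have hs1 : (1 : ℝ) ≤ s :=
    Real.one_le_rpow_of_pos_of_le_one_of_nonpos ht0 ht1 (by
      rw [hudef]; apply div_nonpos_of_nonpos_of_nonneg <;> linarith)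
  have hs0 : (0 : ℝ) < s := lt_of_lt_of_le one_pos hs1
  set R : ℕ := ⌈s⌉₊ with hRdef
  have hR1 : 1 ≤ R := Nat.one_le_ceil_iff.mpr hs0
  have hsR : s ≤ (R : ℝ) := Nat.le_ceil s
  have hR2s : (R : ℝ) ≤ 2 * s := by
    have := Nat.ceil_lt_add_one hs0.le
    rw [hRdef]; linarith
  have hsD : s ^ D = (t ^ θ)⁻¹ := by
    rw [hsdef, ← Real.rpow_natCast (t ^ u) D, ← Real.rpow_mul ht0.le,
      ← Real.rpow_neg ht0.le]
    congr 1
    rw [hudef, hθdef]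
    field_simp
  have hRD : (R : ℝ) ^ D ≤ 2 ^ D * (t ^ θ)⁻¹ := by
    calc (R : ℝ) ^ D ≤ (2 * s) ^ D := pow_le_pow_left₀ (by positivity) hR2s D
      _ = 2 ^ D * s ^ D := mul_pow 2 s D
      _ = 2 ^ D * (t ^ θ)⁻¹ := by rw [hsD]
  have hRβ : (R : ℝ) ^ (-β) ≤ t * (t ^ θ)⁻¹ := by
    have h1 : (R : ℝ) ^ (-β) ≤ s ^ (-β) :=
      Real.rpow_le_rpow_of_nonpos hs0 hsR (by linarith)
    have h2 : s ^ (-β) = t * (t ^ θ)⁻¹ := by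
      rw [hsdef, ← Real.rpow_mul ht0.le]
      have e : u * -β = 1 + (-θ) := by
        rw [hudef, hθdef]; field_simp; ring
      rw [e, Real.rpow_add ht0, Real.rpow_one, Real.rpow_neg ht0.le]
    rw [h2] at h1; exact h1
  -- reduce goal
  have hgoal : 2 * 6 ^ ((d' + 1 + 1) * k) /
      (ε * (α - ((d' + 1 : ℕ) : ℝ))) ^
        ((((d' + 1) * k : ℕ) : ℝ) / (((d' + 1) * k : ℕ) + (α - ((d' + 1 : ℕ) : ℝ))))
      = 2 * 6 ^ ((d' + 1 + 1) * k) * (t ^ θ)⁻¹ := by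
    rw [div_eq_mul_inv]
  rw [effSparsity, hgoal]
  have h6 : (1:ℝ) ≤ 6 ^ ((d' + 1 + 1) * k) := one_le_pow₀ (by norm_num)
  have hinv : (1:ℝ) ≤ (t ^ θ)⁻¹ := by
    have := inv_anti₀ htθ htθ1
    simpa using this
  have hRHS1 : (1 : ℝ) ≤ 2 * 6 ^ ((d' + 1 + 1) * k) * (t ^ θ)⁻¹ := by nlinarith
  apply max_le hRHS1
  apply Real.iSup_le _ (le_trans zero_le_one hRHS1)
  intro i
  set dist : Fin n → ℕ := fun j => ∑ r, (x i r - x j r).natAbs with hdistdef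
  set A : Finset (Fin m) := Finset.univ.filter (fun a => i ∈ psupp (E a)) with hAdef
  set P : Fin m → Prop := fun a => ∀ j, E a j ≠ 0 → dist j ≤ R with hPdef
  have hsplit := Finset.sum_filter_add_sum_filter_not A P
    (fun a => min 1 (lam a ^ 2 / ε ^ 2))
  rw [← hsplit]
  -- count part
  set B : Finset (Fin n) := Finset.univ.filter (fun j => dist j ≤ R) with hBdef
  have hiB : i ∈ B := by
    rw [hBdef, Finset.mem_filter]
    refine ⟨Finset.mem_univ _, ?_⟩
    simp [hdistdef]
  have hcard1 : (A.filter P).card ≤ (4 * B.card) ^ k := by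
    apply paulicount B i hiB E hE
    · intro a
      exact hloc a
    · intro a ha j hj
      rw [Finset.mem_filter] at ha
      rw [hBdef, Finset.mem_filter]
      exact ⟨Finset.mem_univ _, ha.2 j hj⟩
  have hcard2 : B.card ≤ (2 * R + 1) ^ (d' + 1) := boxcount (d'+1) n x hx i R
  have hcount : (∑ a ∈ A.filter P, min 1 (lam a ^ 2 / ε ^ 2))
      ≤ 6 ^ ((d' + 1 + 1) * k) * (t ^ θ)⁻¹ := by
    have hle1 : (∑ a ∈ A.filter P, min 1 (lam a ^ 2 / ε ^ 2))
        ≤ ((A.filter P).card : ℝ) := by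
      calc (∑ a ∈ A.filter P, min 1 (lam a ^ 2 / ε ^ 2))
          ≤ ∑ a ∈ A.filter P, 1 := Finset.sum_le_sum (fun a _ => min_le_left _ _)
        _ = ((A.filter P).card : ℝ) := by simp
    have hle2 : ((A.filter P).card : ℝ) ≤ (4 * ((2 * R + 1):ℝ) ^ (d' + 1)) ^ k := by
      have : (A.filter P).card ≤ (4 * (2 * R + 1) ^ (d' + 1)) ^ k :=
        le_trans hcard1 (Nat.pow_le_pow_left (Nat.mul_le_mul_left 4 hcard2) k)
      calc ((A.filter P).card : ℝ) ≤ (((4 * (2 * R + 1) ^ (d' + 1)) ^ k : ℕ) : ℝ) := by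
            exact_mod_cast this
        _ = (4 * ((2 * R + 1):ℝ) ^ (d' + 1)) ^ k := by push_cast; ring
    have hle3 : ((2 * R + 1) : ℝ) ≤ 3 * (R:ℝ) := by
      have : (1:ℝ) ≤ (R:ℝ) := by exact_mod_cast hR1
      push_cast
      linarith
    have hle4 : (4 * ((2 * R + 1):ℝ) ^ (d' + 1)) ^ k ≤ (4 * (3 * (R:ℝ)) ^ (d' + 1)) ^ k := by
      apply pow_le_pow_left₀ (by positivity)
      apply mul_le_mul_of_nonneg_left _ (by norm_num)
      exact pow_le_pow_left₀ (by positivity) hle3 _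
    have hle5 : (4 * (3 * (R:ℝ)) ^ (d' + 1)) ^ k = 4 ^ k * 3 ^ D * (R:ℝ) ^ D := by
      rw [hDdef]
      ring_nf
      rw [show (12:ℝ)^k = 3^k * 4^k from by rw [← mul_pow]; norm_num]
      ring
    have hle6 : 4 ^ k * 3 ^ D * (R:ℝ) ^ D ≤ 4 ^ k * 3 ^ D * (2 ^ D * (t ^ θ)⁻¹) := by
      apply mul_le_mul_of_nonneg_left hRD (by positivity)
    have hle7 : (4:ℝ) ^ k * 3 ^ D * (2 ^ D * (t ^ θ)⁻¹) ≤ 6 ^ ((d' + 1 + 1) * k) * (t ^ θ)⁻¹ := by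
      have e1 : (4:ℝ) ^ k * 3 ^ D * (2 ^ D * (t ^ θ)⁻¹) = (4 ^ k * 6 ^ D) * (t ^ θ)⁻¹ := by
        rw [show (6:ℝ) ^ D = 3 ^ D * 2 ^ D by rw [← mul_pow]; norm_num]
        ring
      rw [e1]
      apply mul_le_mul_of_nonneg_right _ (by positivity)
      have e2 : (d' + 1 + 1) * k = k + D := by rw [hDdef]; ring
      rw [e2, pow_add]
      apply mul_le_mul_of_nonneg_right _ (by positivity)
      exact pow_le_pow_left₀ (by norm_num) (by norm_num) k
    linarith
  -- tail part
  have htail : (∑ a ∈ A.filter (fun a => ¬ P a), min 1 (lam a ^ 2 / ε ^ 2))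
      ≤ 6 ^ ((d' + 1 + 1) * k) * (t ^ θ)⁻¹ := by
    set C : Finset (Fin n) := Finset.univ.filter (fun j => R < dist j) with hCdef
    have hstep1 : (∑ a ∈ A.filter (fun a => ¬ P a), min 1 (lam a ^ 2 / ε ^ 2))
        ≤ ε⁻¹ * ∑ a ∈ A.filter (fun a => ¬ P a), |lam a| := by
      rw [Finset.mul_sum]
      apply Finset.sum_le_sum
      intro a _
      have h1 : lam a ^ 2 / ε ^ 2 = (|lam a| / ε) ^ 2 := by
        rw [div_pow, _root_.sq_abs]
      have h3 : ε⁻¹ * |lam a| = |lam a| / ε := by rw [div_eq_mul_inv]; ring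
      have h2 : 0 ≤ |lam a| / ε := by positivity
      rw [h1, h3]
      rcases le_or_gt (|lam a| / ε) 1 with h | h
      · exact le_trans (min_le_right _ _) (by nlinarith)
      · exact le_trans (min_le_left _ _) h.le
    have hstep2 : (∑ a ∈ A.filter (fun a => ¬ P a), |lam a|)
        ≤ ∑ j ∈ C, ((dist j : ℕ) : ℝ) ^ (-α) := by
      have h21 : (∑ a ∈ A.filter (fun a => ¬ P a), |lam a|)
          ≤ ∑ a ∈ A.filter (fun a => ¬ P a), ∑ j ∈ C,
              (if E a j ≠ 0 then |lam a| else 0) := by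
        apply Finset.sum_le_sum
        intro a ha
        rw [Finset.mem_filter] at ha
        have hnp : ¬ ∀ j, E a j ≠ 0 → dist j ≤ R := ha.2
        push_neg at hnp
        obtain ⟨j₀, hj₀1, hj₀2⟩ := hnp
        have hj₀C : j₀ ∈ C := by
          rw [hCdef, Finset.mem_filter]
          exact ⟨Finset.mem_univ _, by omega⟩
        have := Finset.single_le_sum
          (f := fun j => if E a j ≠ 0 then |lam a| else 0)
          (fun j _ => by split <;> simp [abs_nonneg]) hj₀C
        simpa [hj₀1] using this
      have h22 : (∑ a ∈ A.filter (fun a => ¬ P a), ∑ j ∈ C,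
            (if E a j ≠ 0 then |lam a| else 0))
          = ∑ j ∈ C, ∑ a ∈ A.filter (fun a => ¬ P a),
              (if E a j ≠ 0 then |lam a| else 0) := Finset.sum_comm
      have h23 : ∀ j ∈ C, (∑ a ∈ A.filter (fun a => ¬ P a),
            (if E a j ≠ 0 then |lam a| else 0)) ≤ ((dist j : ℕ) : ℝ) ^ (-α) := by
        intro j hj
        rw [hCdef, Finset.mem_filter] at hj
        have hd1 : 1 ≤ dist j := by omega
        have hd1R : (1:ℝ) ≤ ((dist j : ℕ):ℝ) := by exact_mod_cast hd1
        have h231 : (∑ a ∈ A.filter (fun a => ¬ P a),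
              (if E a j ≠ 0 then |lam a| else 0))
            ≤ ∑ a ∈ Finset.univ.filter
                (fun a => i ∈ psupp (E a) ∧ j ∈ psupp (E a)), |lam a| := by
          rw [← Finset.sum_filter]
          apply Finset.sum_le_sum_of_subset_of_nonneg
          · intro a ha
            rw [Finset.mem_filter] at ha
            have ha1 := ha.1
            rw [Finset.mem_filter] at ha1
            have hiA : i ∈ psupp (E a) := by
              have := ha1.1
              rw [hAdef, Finset.mem_filter] at this
              exact this.2
            rw [Finset.mem_filter]
            refine ⟨Finset.mem_univ _, hiA, ?_⟩
            rw [psupp, Finset.mem_filter]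
            exact ⟨Finset.mem_univ _, ha.2⟩
          · intro a _ _
            exact abs_nonneg _
        have hdij : (∑ a ∈ Finset.univ.filter
              (fun a => i ∈ psupp (E a) ∧ j ∈ psupp (E a)), |lam a|)
            ≤ 1 / (max 1 ((dist j : ℕ) : ℝ)) ^ α := hdecay i j
        have hmax : max (1:ℝ) ((dist j : ℕ):ℝ) = ((dist j:ℕ):ℝ) := max_eq_right hd1R
        have hflip : 1 / ((dist j:ℕ):ℝ) ^ α = ((dist j:ℕ):ℝ) ^ (-α) := by
          rw [Real.rpow_neg (by positivity), one_div]
        rw [hmax, hflip] at hdij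
        exact le_trans h231 hdij
      calc (∑ a ∈ A.filter (fun a => ¬ P a), |lam a|)
          ≤ ∑ a ∈ A.filter (fun a => ¬ P a), ∑ j ∈ C,
              (if E a j ≠ 0 then |lam a| else 0) := h21
        _ = ∑ j ∈ C, ∑ a ∈ A.filter (fun a => ¬ P a),
              (if E a j ≠ 0 then |lam a| else 0) := h22
        _ ≤ ∑ j ∈ C, ((dist j : ℕ) : ℝ) ^ (-α) := Finset.sum_le_sum h23
    set M : ℕ := Finset.univ.sup dist with hMdef
    have hstep3 : (∑ j ∈ C, ((dist j : ℕ) : ℝ) ^ (-α))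
        ≤ 3 ^ (d'+1) * ((R:ℝ) ^ (-β) / β) := by
      have hmaps : ∀ j ∈ C, dist j ∈ Finset.Icc (R+1) M := by
        intro j hj
        rw [hCdef, Finset.mem_filter] at hj
        rw [Finset.mem_Icc]
        exact ⟨by omega, Finset.le_sup (Finset.mem_univ j)⟩
      have hfib := Finset.sum_fiberwise_of_maps_to hmaps
        (fun j => ((dist j : ℕ):ℝ) ^ (-α))
      rw [← hfib]
      have hper : ∀ r ∈ Finset.Icc (R+1) M,
          (∑ j ∈ C.filter (fun j => dist j = r), ((dist j:ℕ):ℝ) ^ (-α))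
            ≤ 3 ^ (d'+1) * ((r:ℝ)) ^ (-(β+1)) := by
        intro r hr
        rw [Finset.mem_Icc] at hr
        have hr1 : 1 ≤ r := by omega
        have hrpos : (0:ℝ) < (r:ℝ) := by exact_mod_cast Nat.lt_of_lt_of_le Nat.zero_lt_one hr1
        have e1 : (∑ j ∈ C.filter (fun j => dist j = r), ((dist j:ℕ):ℝ) ^ (-α))
            = ((C.filter (fun j => dist j = r)).card : ℝ) * ((r:ℕ):ℝ) ^ (-α) := by
          have hcg : ∀ j ∈ C.filter (fun j => dist j = r),
              ((dist j:ℕ):ℝ) ^ (-α) = ((r:ℕ):ℝ) ^ (-α) := by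
            intro j hj
            rw [Finset.mem_filter] at hj
            rw [hj.2]
          rw [Finset.sum_congr rfl hcg, Finset.sum_const, nsmul_eq_mul]
        rw [e1]
        have hcard : (C.filter (fun j => dist j = r)).card ≤ 3 * (2*r+1)^d' := by
          refine le_trans (Finset.card_le_card ?_) (spherecount d' n x hx i r)
          intro j hj
          rw [Finset.mem_filter] at hj ⊢
          exact ⟨Finset.mem_univ _, hj.2⟩
        have hrα : (0:ℝ) ≤ (r:ℝ) ^ (-α) := Real.rpow_nonneg hrpos.le _
        have hb1 : ((2*r+1:ℕ):ℝ) ≤ 3*(r:ℝ) := by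
          push_cast
          have : (1:ℝ) ≤ (r:ℝ) := by exact_mod_cast hr1
          linarith
        have hc1 : ((C.filter (fun j => dist j = r)).card : ℝ) ≤ 3 * ((2*r+1:ℕ):ℝ)^d' := by
          calc ((C.filter (fun j => dist j = r)).card : ℝ)
              ≤ ((3 * (2*r+1)^d' : ℕ) : ℝ) := by exact_mod_cast hcard
            _ = 3 * ((2*r+1:ℕ):ℝ)^d' := by push_cast; ring
        have hc2 : (3:ℝ) * ((2*r+1:ℕ):ℝ)^d' ≤ 3^(d'+1) * (r:ℝ)^d' := by
          calc (3:ℝ) * ((2*r+1:ℕ):ℝ)^d' ≤ 3 * (3*(r:ℝ))^d' := by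
                apply mul_le_mul_of_nonneg_left _ (by norm_num)
                exact pow_le_pow_left₀ (by positivity) hb1 _
            _ = 3^(d'+1) * (r:ℝ)^d' := by rw [mul_pow, pow_succ]; ring
        have hc3 : (r:ℝ)^d' * (r:ℝ)^(-α) = (r:ℝ) ^ (-(β+1)) := by
          rw [← Real.rpow_natCast (r:ℝ) d', ← Real.rpow_add hrpos]
          congr 1
          rw [hβdef]
          push_cast
          ring
        calc ((C.filter (fun j => dist j = r)).card : ℝ) * ((r:ℕ):ℝ) ^ (-α)
            ≤ (3 * ((2*r+1:ℕ):ℝ)^d') * ((r:ℕ):ℝ) ^ (-α) :=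
              mul_le_mul_of_nonneg_right hc1 hrα
          _ ≤ (3^(d'+1) * (r:ℝ)^d') * ((r:ℕ):ℝ) ^ (-α) :=
              mul_le_mul_of_nonneg_right hc2 hrα
          _ = 3^(d'+1) * ((r:ℝ)^d' * (r:ℝ) ^ (-α)) := by ring
          _ = 3^(d'+1) * ((r:ℝ)) ^ (-(β+1)) := by rw [hc3]
      calc (∑ r ∈ Finset.Icc (R+1) M, ∑ j ∈ C.filter (fun j => dist j = r),
            ((dist j:ℕ):ℝ) ^ (-α))
          ≤ ∑ r ∈ Finset.Icc (R+1) M, 3 ^ (d'+1) * ((r:ℝ)) ^ (-(β+1)) :=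
            Finset.sum_le_sum hper
        _ = 3 ^ (d'+1) * ∑ r ∈ Finset.Icc (R+1) M, ((r:ℝ)) ^ (-(β+1)) := by
            rw [Finset.mul_sum]
        _ ≤ 3 ^ (d'+1) * ((R:ℝ)^(-β)/β) := by
            apply mul_le_mul_of_nonneg_left (tele β hβ R hR1 M) (by positivity)
    have hsum_nonneg : (0:ℝ) ≤ ∑ a ∈ A.filter (fun a => ¬ P a), |lam a| :=
      Finset.sum_nonneg (fun a _ => abs_nonneg _)
    have hfinal1 : ε⁻¹ * ∑ a ∈ A.filter (fun a => ¬ P a), |lam a|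
        ≤ ε⁻¹ * (3 ^ (d'+1) * ((R:ℝ)^(-β)/β)) := by
      apply mul_le_mul_of_nonneg_left (le_trans hstep2 hstep3) (by positivity)
    have hfinal2 : ε⁻¹ * ((3:ℝ) ^ (d'+1) * ((R:ℝ)^(-β)/β)) ≤ 3 ^ (d'+1) * (t ^ θ)⁻¹ := by
      have e1 : ε⁻¹ * ((3:ℝ) ^ (d'+1) * ((R:ℝ)^(-β)/β)) = 3^(d'+1) * ((R:ℝ)^(-β) * t⁻¹) := by
        rw [htdef]
        field_simp
      rw [e1]
      apply mul_le_mul_of_nonneg_left _ (by positivity)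
      have h2 : (R:ℝ)^(-β) * t⁻¹ ≤ (t * (t^θ)⁻¹) * t⁻¹ :=
        mul_le_mul_of_nonneg_right hRβ (by positivity)
      have e3 : (t * (t^θ)⁻¹) * t⁻¹ = (t^θ)⁻¹ := by
        rw [mul_comm t, mul_assoc, mul_inv_cancel₀ (ne_of_gt ht0), mul_one]
      rw [e3] at h2
      exact h2
    have h36 : (3:ℝ)^(d'+1) ≤ 6^((d'+1+1)*k) := by
      have e1 : d'+1 ≤ (d'+1+1)*k :=
        le_trans (by omega) (Nat.le_mul_of_pos_right (d'+1+1) (by omega))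
      calc (3:ℝ)^(d'+1) ≤ 6^(d'+1) := pow_le_pow_left₀ (by norm_num) (by norm_num) _
        _ ≤ 6^((d'+1+1)*k) := pow_le_pow_right₀ (by norm_num) e1
    calc (∑ a ∈ A.filter (fun a => ¬ P a), min 1 (lam a ^ 2 / ε ^ 2))
        ≤ ε⁻¹ * ∑ a ∈ A.filter (fun a => ¬ P a), |lam a| := hstep1
      _ ≤ ε⁻¹ * (3 ^ (d'+1) * ((R:ℝ)^(-β)/β)) := hfinal1
      _ ≤ 3 ^ (d'+1) * (t ^ θ)⁻¹ := hfinal2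
      _ ≤ 6 ^ ((d'+1+1)*k) * (t ^ θ)⁻¹ := mul_le_mul_of_nonneg_right h36 (by positivity)
  linarith
end
end
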